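/- arXiv:1112.3563 — 2 statements merged into one kernel-verified Lean document; each statement's English description precedes it below -/
import Mathlib

section
/- For every N, the completely bounded Banach–Mazur distance between the column Hilbert space C_N and the row Hilbert space R_N equals N; in particular, for any linear isomorphism u : ℂ^N → ℂ^N with singular values λᵢ and inverse singular values βᵢ, one has N ≤ (Σᵢ |βᵢ|²)^{1/2} (Σᵢ |λᵢ|²)^{1/2} = ‖u⁻¹ : R_N → C_N‖_cb · ‖u : C_N → R_N‖_cb. -/
open scoped BigOperators Kronecker ComplexOrder Matrix

/-- The ℓ²→ℓ² operator norm of a square complex matrix. -/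
noncomputable def opNorm {n : Type*} [Fintype n] [DecidableEq n] (A : Matrix n n ℂ) : ℝ :=
  ‖Matrix.toEuclideanCLM (𝕜 := ℂ) A‖

/-- The trace norm (Schatten-1 norm) of a square complex matrix. -/
noncomputable def traceNorm {n : Type*} [Fintype n] [DecidableEq n] (A : Matrix n n ℂ) : ℝ :=
  (((Matrix.posSemidef_conjTranspose_mul_self A).1.eigenvectorUnitary.1 *
      Matrix.diagonal (((↑) : ℝ → ℂ) ∘ (√·) ∘ (Matrix.posSemidef_conjTranspose_mul_self A).1.eigenvalues) *
      (star (Matrix.posSemidef_conjTranspose_mul_self A).1.eigenvectorUnitary : Matrix n n ℂ)).trace).re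

/-- A singular value decomposition predicate: `u = ∑ i, lam i • |e i⟩⟨f i|` with
orthonormal systems `e`, `f` and nonnegative `lam`. -/
def IsSVD {N : ℕ} (u : Matrix (Fin N) (Fin N) ℂ) (lam : Fin N → ℝ) : Prop :=
  ∃ e f : Fin N → (Fin N → ℂ),
    (∀ i j, star (e i) ⬝ᵥ e j = if i = j then 1 else 0) ∧
    (∀ i j, star (f i) ⬝ᵥ f j = if i = j then 1 else 0) ∧
    (∀ i, 0 ≤ lam i) ∧
    u = ∑ i, (lam i : ℂ) • Matrix.vecMulVec (e i) (star (f i))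

private lemma sum4_swap {M α : Type*} [AddCommMonoid M] [Fintype α] (g : α → α → α → α → M) :
    ∑ j, ∑ i, ∑ k, ∑ l, g j i k l = ∑ k, ∑ l, ∑ j, ∑ i, g j i k l := by
  calc ∑ j, ∑ i, ∑ k, ∑ l, g j i k l
      = ∑ j, ∑ k, ∑ l, ∑ i, g j i k l := Finset.sum_congr rfl fun j _ => by
        rw [Finset.sum_comm]; exact Finset.sum_congr rfl fun k _ => Finset.sum_comm
    _ = ∑ k, ∑ j, ∑ l, ∑ i, g j i k l := Finset.sum_comm
    _ = ∑ k, ∑ l, ∑ j, ∑ i, g j i k l := Finset.sum_congr rfl fun k _ => Finset.sum_comm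

/-- Frobenius norm squared of a matrix with an SVD is the sum of squares of the
singular values. -/
private lemma frob_of_isSVD {N : ℕ} {u : Matrix (Fin N) (Fin N) ℂ} {lam : Fin N → ℝ}
    (h : IsSVD u lam) :
    ∑ j : Fin N, ∑ i : Fin N, ‖u j i‖ ^ 2 = ∑ i, lam i ^ 2 := by
  obtain ⟨e, f, he, hf, hl, rfl⟩ := h
  set u : Matrix (Fin N) (Fin N) ℂ := ∑ i, (lam i : ℂ) • Matrix.vecMulVec (e i) (star (f i))
    with hu
  have key : ∀ j i, u j i = ∑ k, (lam k : ℂ) * (e k j * (starRingEnd ℂ) (f k i)) := by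
    intro j i
    simp [hu, Matrix.sum_apply, Matrix.vecMulVec_apply, mul_assoc, Complex.star_def]
  have he' : ∀ k l, ∑ j, e k j * (starRingEnd ℂ) (e l j) = if l = k then 1 else 0 := by
    intro k l
    simpa [dotProduct, Complex.star_def, mul_comm] using he l k
  have hf' : ∀ k l, ∑ i, (starRingEnd ℂ) (f k i) * f l i = if k = l then 1 else 0 := by
    intro k l
    simpa [dotProduct, Complex.star_def] using hf k l
  have expand : ∀ j i, u j i * (starRingEnd ℂ) (u j i)
      = ∑ k, ∑ l, ((lam k : ℂ) * (starRingEnd ℂ) ((lam l : ℂ))) *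
          ((e k j * (starRingEnd ℂ) (e l j)) * ((starRingEnd ℂ) (f k i) * f l i)) := by
    intro j i
    rw [key, map_sum, Finset.sum_mul_sum]
    refine Finset.sum_congr rfl fun k _ => Finset.sum_congr rfl fun l _ => ?_
    simp only [map_mul, Complex.conj_conj]
    ring
  have main : ∑ j, ∑ i, u j i * (starRingEnd ℂ) (u j i) = ∑ k, ((lam k : ℂ))^2 := by
    simp only [expand]
    rw [sum4_swap]
    have : ∀ k l : Fin N, ∑ j, ∑ i, ((lam k : ℂ) * (starRingEnd ℂ) ((lam l : ℂ))) *
          ((e k j * (starRingEnd ℂ) (e l j)) * ((starRingEnd ℂ) (f k i) * f l i))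
        = ((lam k : ℂ) * (starRingEnd ℂ) ((lam l : ℂ))) *
          ((∑ j, e k j * (starRingEnd ℂ) (e l j)) * (∑ i, (starRingEnd ℂ) (f k i) * f l i)) := by
      intro k l
      rw [Finset.sum_mul_sum, Finset.mul_sum]
      refine Finset.sum_congr rfl fun j _ => ?_
      rw [Finset.mul_sum]
    rw [Finset.sum_congr rfl fun k (_ : k ∈ Finset.univ) =>
      Finset.sum_congr rfl fun l (_ : l ∈ Finset.univ) => this k l]
    simp [he', hf', Complex.conj_ofReal, mul_ite, ite_mul, Finset.sum_ite_eq, sq]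
  have cast_eq : ((∑ j : Fin N, ∑ i : Fin N, ‖u j i‖ ^ 2 : ℝ) : ℂ)
      = ((∑ i, lam i ^ 2 : ℝ) : ℂ) := by
    push_cast
    rw [← main]
    refine Finset.sum_congr rfl fun j _ => Finset.sum_congr rfl fun i _ => ?_
    rw [Complex.mul_conj, ← Complex.ofReal_pow, Complex.sq_norm]
  exact_mod_cast cast_eq

private lemma isSVD_one (N : ℕ) : IsSVD (1 : Matrix (Fin N) (Fin N) ℂ) (fun _ => 1) := by
  refine ⟨fun i => Pi.single i 1, fun i => Pi.single i 1, ?_, ?_, fun _ => zero_le_one, ?_⟩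
  · intro i j
    simp [dotProduct, Pi.single_apply, Complex.star_def, apply_ite, eq_comm]
  · intro i j
    simp [dotProduct, Pi.single_apply, Complex.star_def, apply_ite, eq_comm]
  · ext a b
    simp [Matrix.sum_apply, Matrix.vecMulVec_apply, Matrix.one_apply, Pi.single_apply,
      Complex.star_def, apply_ite, eq_comm]

private lemma lower_bound {N : ℕ} (u v : Matrix (Fin N) (Fin N) ℂ) (lam beta : Fin N → ℝ)
    (huv : u * v = 1) (hu : IsSVD u lam) (hv : IsSVD v beta) :
    (N : ℝ) ≤ Real.sqrt (∑ i, beta i ^ 2) * Real.sqrt (∑ i, lam i ^ 2) := by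
  have S1 : ∑ j : Fin N, ∑ i : Fin N, ‖u j i‖ ^ 2 = ∑ i, lam i ^ 2 :=
    frob_of_isSVD hu
  have S2 : ∑ i : Fin N, ∑ j : Fin N, ‖v i j‖ ^ 2 = ∑ i, beta i ^ 2 :=
    frob_of_isSVD hv
  have htr : Matrix.trace (u * v) = (N : ℂ) := by
    rw [huv, Matrix.trace_one]; simp
  have htr' : (∑ j : Fin N, ∑ i : Fin N, u j i * v i j) = (N : ℂ) := by
    rw [← htr]
    simp [Matrix.trace, Matrix.mul_apply, Matrix.diag]
  set T : ℝ := ∑ j : Fin N, ∑ i : Fin N, ‖u j i‖ * ‖v i j‖ with hT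
  have hNT : (N : ℝ) ≤ T := by
    have : (N : ℝ) = ‖∑ j : Fin N, ∑ i : Fin N, u j i * v i j‖ := by
      rw [htr']; simp
    rw [this]
    refine le_trans (norm_sum_le _ _) (Finset.sum_le_sum fun j _ => ?_)
    refine le_trans (norm_sum_le _ _) (le_of_eq ?_)
    exact Finset.sum_congr rfl fun i _ => norm_mul _ _
  have hT0 : 0 ≤ T := le_trans (Nat.cast_nonneg N) hNT
  -- Cauchy–Schwarz over the product index
  have hTprod : T = ∑ p : Fin N × Fin N, ‖u p.1 p.2‖ * ‖v p.2 p.1‖ := by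
    rw [hT, ← Finset.sum_product', Finset.univ_product_univ]
  have hS1prod : ∑ p : Fin N × Fin N, ‖u p.1 p.2‖ ^ 2 = ∑ i, lam i ^ 2 := by
    rw [← S1, ← Finset.sum_product', Finset.univ_product_univ]
  have hS2prod : ∑ p : Fin N × Fin N, ‖v p.2 p.1‖ ^ 2 = ∑ i, beta i ^ 2 := by
    rw [← S2, ← Finset.sum_product', Finset.univ_product_univ]
    exact Fintype.sum_equiv (Equiv.prodComm _ _) _ _ (fun p => rfl)
  have hCS : T ^ 2 ≤ (∑ i, lam i ^ 2) * (∑ i, beta i ^ 2) := by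
    rw [hTprod, ← hS1prod, ← hS2prod]
    exact Finset.sum_mul_sq_le_sq_mul_sq _ _ _
  have hl0 : 0 ≤ ∑ i, lam i ^ 2 := Finset.sum_nonneg fun i _ => sq_nonneg _
  have hb0 : 0 ≤ ∑ i, beta i ^ 2 := Finset.sum_nonneg fun i _ => sq_nonneg _
  have : T ≤ Real.sqrt ((∑ i, lam i ^ 2) * (∑ i, beta i ^ 2)) :=
    (Real.le_sqrt hT0 (mul_nonneg hl0 hb0)).mpr hCS
  calc (N : ℝ) ≤ T := hNT
    _ ≤ Real.sqrt ((∑ i, lam i ^ 2) * (∑ i, beta i ^ 2)) := this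
    _ = Real.sqrt (∑ i, beta i ^ 2) * Real.sqrt (∑ i, lam i ^ 2) := by
        rw [Real.sqrt_mul hl0, mul_comm]

/-- `d_cb(C_N, R_N) = N`, and the lower bound for any isomorphism. -/
theorem cb_banach_mazur_distance_column_row (N : ℕ) :
    sInf { r : ℝ | ∃ u v : Matrix (Fin N) (Fin N) ℂ, ∃ lam beta : Fin N → ℝ,
        u * v = 1 ∧ v * u = 1 ∧ IsSVD u lam ∧ IsSVD v beta ∧
        r = Real.sqrt (∑ i, beta i ^ 2) * Real.sqrt (∑ i, lam i ^ 2) } = N ∧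
    ∀ (u v : Matrix (Fin N) (Fin N) ℂ) (lam beta : Fin N → ℝ),
      u * v = 1 → v * u = 1 → IsSVD u lam → IsSVD v beta →
      (N : ℝ) ≤ Real.sqrt (∑ i, beta i ^ 2) * Real.sqrt (∑ i, lam i ^ 2) := by
  constructor
  · have hmem : (N : ℝ) ∈ { r : ℝ | ∃ u v : Matrix (Fin N) (Fin N) ℂ,
        ∃ lam beta : Fin N → ℝ,
        u * v = 1 ∧ v * u = 1 ∧ IsSVD u lam ∧ IsSVD v beta ∧
        r = Real.sqrt (∑ i, beta i ^ 2) * Real.sqrt (∑ i, lam i ^ 2) } := by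
      refine ⟨1, 1, fun _ => 1, fun _ => 1, one_mul 1, one_mul 1, isSVD_one N, isSVD_one N, ?_⟩
      have : (∑ _i : Fin N, (1 : ℝ) ^ 2) = (N : ℝ) := by simp
      rw [this, Real.mul_self_sqrt (Nat.cast_nonneg N)]
    have hlb : ∀ r ∈ { r : ℝ | ∃ u v : Matrix (Fin N) (Fin N) ℂ,
        ∃ lam beta : Fin N → ℝ,
        u * v = 1 ∧ v * u = 1 ∧ IsSVD u lam ∧ IsSVD v beta ∧
        r = Real.sqrt (∑ i, beta i ^ 2) * Real.sqrt (∑ i, lam i ^ 2) }, (N : ℝ) ≤ r := by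
      rintro r ⟨u, v, lam, beta, huv, hvu, hu, hv, rfl⟩
      exact lower_bound u v lam beta huv hu hv
    exact le_antisymm (csInf_le ⟨(N : ℝ), hlb⟩ hmem) (le_csInf ⟨(N : ℝ), hmem⟩ hlb)
  · intro u v lam beta huv hvu hu hv
    exact lower_bound u v lam beta huv hu hv
end

section
/- Let U, V be unitaries on H ⊗ K₁ and H' ⊗ K₂ respectively, with orthonormal families (|i⟩) in H and (|i⟩) in H'. Then ‖Σᵢ ⟨x|U|i⟩ ⊗ ⟨i|V|y⟩‖_{B(K₁⊗K₂)} ≤ 1 for any unit vectors x ∈ H, y ∈ H', where ⟨x|U|i⟩ = (⟨x|⊗1)U(|i⟩⊗1) and ⟨i|V|y⟩ = (⟨i|⊗1)V(|y⟩⊗1). -/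
open scoped BigOperators Kronecker ComplexOrder Matrix

/-- The operator block `⟨x|A|y⟩ = (⟨x| ⊗ 1) A (|y⟩ ⊗ 1)` of `A ∈ B(H ⊗ K)`. -/
noncomputable def blockV {m k : ℕ} (x : Fin m → ℂ) (A : Matrix (Fin m × Fin k) (Fin m × Fin k) ℂ)
    (y : Fin m → ℂ) : Matrix (Fin k) (Fin k) ℂ :=
  Matrix.of fun p q => ∑ a, ∑ b, (starRingEnd ℂ) (x a) * A (a, p) (b, q) * y b

namespace Aux17

open scoped Matrix.Norms.L2Operator

lemma kron_conjTranspose {a b c d : Type*} (A : Matrix a b ℂ) (B : Matrix c d ℂ) :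
    (A ⊗ₖ B)ᴴ = Aᴴ ⊗ₖ Bᴴ := by
  ext ⟨p, q⟩ ⟨r, s⟩
  simp [Matrix.conjTranspose_apply]

lemma sub_kron {a b c d : Type*} (A B : Matrix a b ℂ) (C : Matrix c d ℂ) :
    (A - B) ⊗ₖ C = A ⊗ₖ C - B ⊗ₖ C := by
  ext ⟨p, q⟩ ⟨r, s⟩
  simp [sub_mul]

lemma kron_sub {a b c d : Type*} (A : Matrix a b ℂ) (B C : Matrix c d ℂ) :
    A ⊗ₖ (B - C) = A ⊗ₖ B - A ⊗ₖ C := by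
  ext ⟨p, q⟩ ⟨r, s⟩
  simp [mul_sub]

lemma kron_one_psd {a c : Type*} [Fintype a] [Fintype c] [DecidableEq a] [DecidableEq c]
    {C : Matrix a a ℂ} (h : C.PosSemidef) :
    (C ⊗ₖ (1 : Matrix c c ℂ)).PosSemidef := by
  exact h.kronecker Matrix.PosSemidef.one

lemma one_kron_psd {a c : Type*} [Fintype a] [Fintype c] [DecidableEq a] [DecidableEq c]
    {C : Matrix a a ℂ} (h : C.PosSemidef) :
    ((1 : Matrix c c ℂ) ⊗ₖ C).PosSemidef := by
  exact Matrix.PosSemidef.one.kronecker h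

/-- If `1 - AᴴA` is PSD then the ℓ²→ℓ² operator norm of `A` is at most 1. -/
lemma l2_norm_le_one {a b : Type*} [Fintype a] [Fintype b] [DecidableEq b]
    (A : Matrix a b ℂ) (h : ((1 : Matrix b b ℂ) - Aᴴ * A).PosSemidef) : ‖A‖ ≤ 1 := by
  rw [Matrix.l2_opNorm_def]
  refine ContinuousLinearMap.opNorm_le_bound _ zero_le_one fun v => ?_
  rw [one_mul]
  show ‖(WithLp.equiv 2 (a → ℂ)).symm (A *ᵥ (WithLp.equiv 2 (b → ℂ)) v)‖ ≤ ‖v‖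
  set w : b → ℂ := (WithLp.equiv 2 (b → ℂ)) v with hw
  have hnorm2 : ‖(WithLp.equiv 2 (a → ℂ)).symm (A *ᵥ w)‖ ^ 2
      = RCLike.re (dotProduct (star w) ((Aᴴ * A) *ᵥ w)) := by
    rw [← @inner_self_eq_norm_sq ℂ, EuclideanSpace.inner_eq_star_dotProduct]
    show RCLike.re ((A *ᵥ w) ⬝ᵥ star (A *ᵥ w)) = _
    rw [dotProduct_comm]
    congr 1
    rw [Matrix.star_mulVec, ← Matrix.dotProduct_mulVec, Matrix.mulVec_mulVec]
  have hvnorm2 : ‖v‖ ^ 2 = RCLike.re (dotProduct (star w) w) := by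
    rw [← @inner_self_eq_norm_sq ℂ, EuclideanSpace.inner_eq_star_dotProduct]
    exact congrArg _ (dotProduct_comm _ _)
  have hkey : ‖(WithLp.equiv 2 (a → ℂ)).symm (A *ᵥ w)‖ ^ 2 ≤ ‖v‖ ^ 2 := by
    rw [hnorm2, hvnorm2]
    have h0 := h.re_dotProduct_nonneg w
    rw [Matrix.sub_mulVec, dotProduct_sub, map_sub, Matrix.one_mulVec] at h0
    linarith
  nlinarith [norm_nonneg ((WithLp.equiv 2 (a → ℂ)).symm (A *ᵥ w)), norm_nonneg v]

/-- The isometry `|x⟩ ⊗ 1 : K → H ⊗ K` as a matrix. -/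
noncomputable def ketOne {m k : ℕ} (x : Fin m → ℂ) : Matrix (Fin m × Fin k) (Fin k) ℂ :=
  Matrix.of fun p q => x p.1 * (if p.2 = q then 1 else 0)

lemma ketOne_conjTranspose_mul {m k : ℕ} (u v : Fin m → ℂ) :
    (ketOne (k := k) u)ᴴ * ketOne (k := k) v = (star u ⬝ᵥ v) • (1 : Matrix (Fin k) (Fin k) ℂ) := by
  ext p q
  simp only [ketOne, Matrix.mul_apply, Matrix.conjTranspose_apply, Fintype.sum_prod_type,
    Matrix.of_apply, Matrix.smul_apply, Matrix.one_apply, dotProduct, Pi.star_apply,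
    smul_eq_mul]
  rw [Finset.sum_mul]
  refine Finset.sum_congr rfl fun a _ => ?_
  simp [star_mul', apply_ite, mul_ite, ite_mul, Finset.sum_ite_eq, mul_comm, mul_assoc]
  split_ifs with h <;> simp [h, eq_comm]

lemma blockV_eq {m k : ℕ} (x : Fin m → ℂ) (A : Matrix (Fin m × Fin k) (Fin m × Fin k) ℂ)
    (y : Fin m → ℂ) : blockV x A y = (ketOne (k := k) x)ᴴ * A * ketOne (k := k) y := by
  ext p q
  simp only [blockV, ketOne, Matrix.mul_apply, Matrix.conjTranspose_apply, Matrix.of_apply,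
    Fintype.sum_prod_type, star_mul', apply_ite, star_one, star_zero, ite_mul, mul_ite,
    one_mul, mul_one, zero_mul, mul_zero, Finset.sum_ite_eq, Finset.sum_ite_eq',
    Finset.mem_univ, if_true, Finset.sum_mul, Finset.mul_sum]
  rw [Finset.sum_comm]
  rfl

/-- `1 - P` is PSD, where `P` is the projection onto the span of an orthonormal family. -/
lemma proj_psd {m k N : ℕ} (e : Fin N → (Fin m → ℂ))
    (he : ∀ i j, star (e i) ⬝ᵥ e j = if i = j then 1 else 0) :
    ((1 : Matrix (Fin m × Fin k) (Fin m × Fin k) ℂ)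
      - ∑ i, ketOne (k := k) (e i) * (ketOne (k := k) (e i))ᴴ).PosSemidef := by
  set P : Matrix (Fin m × Fin k) (Fin m × Fin k) ℂ :=
    ∑ i, ketOne (k := k) (e i) * (ketOne (k := k) (e i))ᴴ with hPdef
  have hPH : Pᴴ = P := by
    simp [hPdef, Matrix.conjTranspose_sum, Matrix.conjTranspose_mul]
  have hterm : ∀ i j, (ketOne (k := k) (e i) * (ketOne (k := k) (e i))ᴴ)
      * (ketOne (k := k) (e j) * (ketOne (k := k) (e j))ᴴ)
      = if i = j then ketOne (k := k) (e i) * (ketOne (k := k) (e i))ᴴ else 0 := by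
    intro i j
    rw [Matrix.mul_assoc, ← Matrix.mul_assoc ((ketOne (e i))ᴴ), ketOne_conjTranspose_mul, he]
    split_ifs with h
    · subst h; simp [Matrix.mul_assoc]
    · simp
  have hPP : P * P = P := by
    rw [hPdef, Finset.sum_mul]
    refine Finset.sum_congr rfl fun i _ => ?_
    rw [Finset.mul_sum]
    simp [hterm]
  have h1 : ((1 - P)ᴴ * (1 - P)) = 1 - P := by
    rw [Matrix.conjTranspose_sub, Matrix.conjTranspose_one, hPH, sub_mul, one_mul, mul_sub,
      mul_one, hPP, sub_self, sub_zero]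
  have h2 := Matrix.posSemidef_conjTranspose_mul_self (1 - P)
  rwa [h1] at h2


/-- The left factor `Σᵢ Aᵢ ⊗ |i⟩⟨·|` of the factorization. -/
noncomputable def Lm {k1 k2 N : ℕ} (A : Fin N → Matrix (Fin k1) (Fin k1) ℂ) :
    Matrix (Fin k1 × Fin k2) (Fin N × (Fin k1 × Fin k2)) ℂ :=
  Matrix.of fun pq irs => A irs.1 pq.1 irs.2.1 * (if pq.2 = irs.2.2 then 1 else 0)

noncomputable def Rm {k1 k2 N : ℕ} (B : Fin N → Matrix (Fin k2) (Fin k2) ℂ) :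
    Matrix (Fin N × (Fin k1 × Fin k2)) (Fin k1 × Fin k2) ℂ :=
  Matrix.of fun irs pq => (if irs.2.1 = pq.1 then 1 else 0) * B irs.1 irs.2.2 pq.2

lemma sum_kron_eq {k1 k2 N : ℕ} (A : Fin N → Matrix (Fin k1) (Fin k1) ℂ)
    (B : Fin N → Matrix (Fin k2) (Fin k2) ℂ) :
    ∑ i, A i ⊗ₖ B i = Lm (k2 := k2) A * Rm (k1 := k1) B := by
  ext ⟨p, q⟩ ⟨p', q'⟩
  simp only [Matrix.sum_apply, Matrix.kroneckerMap_apply, Lm, Rm, Matrix.mul_apply,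
    Matrix.of_apply, Fintype.sum_prod_type, ite_mul, mul_ite, one_mul, mul_one, zero_mul,
    mul_zero, Finset.sum_ite_eq, Finset.sum_ite_eq', Finset.mem_univ, if_true,
    Finset.sum_ite_irrel, Finset.sum_const_zero]

lemma Lm_mul_conjTranspose {k1 k2 N : ℕ} (A : Fin N → Matrix (Fin k1) (Fin k1) ℂ) :
    Lm (k2 := k2) A * (Lm (k2 := k2) A)ᴴ = (∑ i, A i * (A i)ᴴ) ⊗ₖ (1 : Matrix (Fin k2) (Fin k2) ℂ) := by
  ext ⟨p, q⟩ ⟨p', q'⟩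
  simp only [Lm, Matrix.mul_apply, Matrix.conjTranspose_apply, Matrix.of_apply,
    Fintype.sum_prod_type, Matrix.sum_apply, Matrix.kroneckerMap_apply, Matrix.one_apply,
    star_mul', apply_ite, star_one, star_zero, ite_mul, mul_ite, one_mul, mul_one, zero_mul,
    mul_zero, Finset.sum_ite_eq, Finset.sum_ite_eq', Finset.mem_univ, if_true, Finset.sum_mul,
    Finset.mul_sum, Finset.sum_ite_irrel, Finset.sum_const_zero]
  split_ifs with h _h2 <;>
    simp_all [eq_comm, Finset.sum_ite_irrel, Finset.sum_const_zero,
      Finset.sum_ite_eq, Finset.sum_ite_eq']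

lemma Rm_conjTranspose_mul {k1 k2 N : ℕ} (B : Fin N → Matrix (Fin k2) (Fin k2) ℂ) :
    (Rm (k1 := k1) B)ᴴ * Rm (k1 := k1) B = (1 : Matrix (Fin k1) (Fin k1) ℂ) ⊗ₖ (∑ i, (B i)ᴴ * B i) := by
  ext ⟨p, q⟩ ⟨p', q'⟩
  simp only [Rm, Matrix.mul_apply, Matrix.conjTranspose_apply, Matrix.of_apply,
    Fintype.sum_prod_type, Matrix.sum_apply, Matrix.kroneckerMap_apply, Matrix.one_apply,
    star_mul', apply_ite, star_one, star_zero, ite_mul, mul_ite, one_mul, mul_one, zero_mul,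
    mul_zero, Finset.sum_ite_eq, Finset.sum_ite_eq', Finset.mem_univ, if_true, Finset.sum_mul,
    Finset.mul_sum, Finset.sum_ite_irrel, Finset.sum_const_zero]
  split_ifs with h _h2 <;>
    simp_all [eq_comm, Finset.sum_ite_irrel, Finset.sum_const_zero,
      Finset.sum_ite_eq, Finset.sum_ite_eq']

/-- `1 - Σᵢ ⟨x|U|i⟩⟨x|U|i⟩ᴴ` is PSD. -/
lemma left_psd {m k1 N : ℕ} {U : Matrix (Fin m × Fin k1) (Fin m × Fin k1) ℂ}
    (hU2 : U * Uᴴ = 1) (e : Fin N → (Fin m → ℂ))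
    (he : ∀ i j, star (e i) ⬝ᵥ e j = if i = j then 1 else 0)
    {x : Fin m → ℂ} (hx : star x ⬝ᵥ x = 1) :
    ((1 : Matrix (Fin k1) (Fin k1) ℂ)
      - ∑ i, blockV x U (e i) * (blockV x U (e i))ᴴ).PosSemidef := by
  have hWW : ((ketOne (k := k1) x)ᴴ * U) * ((ketOne (k := k1) x)ᴴ * U)ᴴ = (1 : Matrix (Fin k1) (Fin k1) ℂ) := by
    rw [Matrix.conjTranspose_mul, Matrix.conjTranspose_conjTranspose, Matrix.mul_assoc,
      ← Matrix.mul_assoc U, hU2, Matrix.one_mul, ketOne_conjTranspose_mul, hx, one_smul]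
  have hsum : ∑ i, blockV x U (e i) * (blockV x U (e i))ᴴ
      = ((ketOne (k := k1) x)ᴴ * U) * (∑ i, ketOne (k := k1) (e i) * (ketOne (k := k1) (e i))ᴴ)
        * ((ketOne (k := k1) x)ᴴ * U)ᴴ := by
    rw [Matrix.mul_sum, Matrix.sum_mul]
    refine Finset.sum_congr rfl fun i _ => ?_
    simp only [blockV_eq, Matrix.conjTranspose_mul, Matrix.conjTranspose_conjTranspose,
      Matrix.mul_assoc]
  have hfact : (1 : Matrix (Fin k1) (Fin k1) ℂ)
      - ∑ i, blockV x U (e i) * (blockV x U (e i))ᴴ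
      = ((ketOne (k := k1) x)ᴴ * U) * ((1 : Matrix (Fin m × Fin k1) (Fin m × Fin k1) ℂ)
          - ∑ i, ketOne (k := k1) (e i) * (ketOne (k := k1) (e i))ᴴ) * ((ketOne (k := k1) x)ᴴ * U)ᴴ := by
    rw [Matrix.mul_sub, Matrix.sub_mul, Matrix.mul_one, hsum, hWW]
  rw [hfact]
  exact (proj_psd e he).mul_mul_conjTranspose_same _

/-- `1 - Σᵢ ⟨i|V|y⟩ᴴ⟨i|V|y⟩` is PSD. -/
lemma right_psd {m' k2 N : ℕ} {V : Matrix (Fin m' × Fin k2) (Fin m' × Fin k2) ℂ}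
    (hV2 : Vᴴ * V = 1) (e' : Fin N → (Fin m' → ℂ))
    (he' : ∀ i j, star (e' i) ⬝ᵥ e' j = if i = j then 1 else 0)
    {y : Fin m' → ℂ} (hy : star y ⬝ᵥ y = 1) :
    ((1 : Matrix (Fin k2) (Fin k2) ℂ)
      - ∑ i, (blockV (e' i) V y)ᴴ * blockV (e' i) V y).PosSemidef := by
  have hZZ : (V * ketOne (k := k2) y)ᴴ * (V * ketOne (k := k2) y) = (1 : Matrix (Fin k2) (Fin k2) ℂ) := by
    rw [Matrix.conjTranspose_mul, Matrix.mul_assoc, ← Matrix.mul_assoc Vᴴ, hV2,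
      Matrix.one_mul, ketOne_conjTranspose_mul, hy, one_smul]
  have hsum : ∑ i, (blockV (e' i) V y)ᴴ * blockV (e' i) V y
      = (V * ketOne (k := k2) y)ᴴ * (∑ i, ketOne (k := k2) (e' i) * (ketOne (k := k2) (e' i))ᴴ)
        * (V * ketOne (k := k2) y) := by
    rw [Matrix.mul_sum, Matrix.sum_mul]
    refine Finset.sum_congr rfl fun i _ => ?_
    simp only [blockV_eq, Matrix.conjTranspose_mul, Matrix.conjTranspose_conjTranspose,
      Matrix.mul_assoc]
  have hfact : (1 : Matrix (Fin k2) (Fin k2) ℂ)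
      - ∑ i, (blockV (e' i) V y)ᴴ * blockV (e' i) V y
      = (V * ketOne (k := k2) y)ᴴ * ((1 : Matrix (Fin m' × Fin k2) (Fin m' × Fin k2) ℂ)
          - ∑ i, ketOne (k := k2) (e' i) * (ketOne (k := k2) (e' i))ᴴ) * (V * ketOne (k := k2) y) := by
    rw [Matrix.mul_sub, Matrix.sub_mul, Matrix.mul_one, hsum, hZZ]
  rw [hfact]
  exact (proj_psd e' he').conjTranspose_mul_mul_same _

end Aux17

open Aux17 in
open scoped Matrix.Norms.L2Operator in
/-- `‖Σᵢ ⟨x|U|i⟩ ⊗ ⟨i|V|y⟩‖ ≤ 1` for unitaries `U`, `V`. -/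
theorem unitary_block_sum_contractive {m m' k1 k2 N : ℕ}
    (U : Matrix (Fin m × Fin k1) (Fin m × Fin k1) ℂ)
    (V : Matrix (Fin m' × Fin k2) (Fin m' × Fin k2) ℂ)
    (hU : U ∈ Matrix.unitaryGroup (Fin m × Fin k1) ℂ)
    (hV : V ∈ Matrix.unitaryGroup (Fin m' × Fin k2) ℂ)
    (e : Fin N → (Fin m → ℂ)) (e' : Fin N → (Fin m' → ℂ))
    (he : ∀ i j, star (e i) ⬝ᵥ e j = if i = j then 1 else 0)
    (he' : ∀ i j, star (e' i) ⬝ᵥ e' j = if i = j then 1 else 0)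
    (x : Fin m → ℂ) (y : Fin m' → ℂ)
    (hx : star x ⬝ᵥ x = 1) (hy : star y ⬝ᵥ y = 1) :
    opNorm (∑ i, blockV x U (e i) ⊗ₖ blockV (e' i) V y) ≤ 1 := by
  have hU2 : U * Uᴴ = 1 := by
    have h := (Matrix.mem_unitaryGroup_iff.mp hU)
    rwa [Matrix.star_eq_conjTranspose] at h
  have hV2 : Vᴴ * V = 1 := by
    have h := (Matrix.mem_unitaryGroup_iff'.mp hV)
    rwa [Matrix.star_eq_conjTranspose] at h
  have hLn : ‖Lm (k2 := k2) (fun i => blockV x U (e i))‖ ≤ 1 := by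
    rw [← Matrix.l2_opNorm_conjTranspose]
    refine l2_norm_le_one _ ?_
    rw [Matrix.conjTranspose_conjTranspose, Lm_mul_conjTranspose,
      ← Matrix.one_kronecker_one (α := ℂ) (m := Fin k1) (n := Fin k2), ← sub_kron]
    exact kron_one_psd (left_psd hU2 e he hx)
  have hRn : ‖Rm (k1 := k1) (fun i => blockV (e' i) V y)‖ ≤ 1 := by
    refine l2_norm_le_one _ ?_
    rw [Rm_conjTranspose_mul,
      ← Matrix.one_kronecker_one (α := ℂ) (m := Fin k1) (n := Fin k2), ← kron_sub]
    exact one_kron_psd (right_psd hV2 e' he' hy)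
  show ‖Matrix.toEuclideanCLM (𝕜 := ℂ) (∑ i, blockV x U (e i) ⊗ₖ blockV (e' i) V y)‖ ≤ 1
  rw [← Matrix.cstar_norm_def,
    sum_kron_eq (fun i => blockV x U (e i)) (fun i => blockV (e' i) V y)]
  calc ‖Lm (k2 := k2) (fun i => blockV x U (e i)) * Rm (k1 := k1) (fun i => blockV (e' i) V y)‖
      ≤ ‖Lm (k2 := k2) (fun i => blockV x U (e i))‖
        * ‖Rm (k1 := k1) (fun i => blockV (e' i) V y)‖ := Matrix.l2_opNorm_mul _ _
    _ ≤ 1 := by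
        nlinarith [norm_nonneg (Lm (k2 := k2) (fun i => blockV x U (e i))),
          norm_nonneg (Rm (k1 := k1) (fun i => blockV (e' i) V y))]
end
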